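/- Let c > 0 and let x : (−c, c) → ℝ be a twice continuously differentiable function with x(t) > 0 for all t ∈ (−c, c), satisfying x''(t)/(1 + x'(t)²) = 1/x(t) − (1/2)(x(t) − x'(t)·t) for all t ∈ (−c, c), with x'(0) = 0 and 0 < x(0) < √(4 − 2√2). Define, on a neighbourhood of 0 where x(t)² + t² < 4, the function F(t) = [4 − x(t)(x(t) − x'(t)t)]·(x(t) − x'(t)t) / ( x(t)·(4 − x(t)² − t²)·(1 + x'(t)²) ). Then F(0) = 1, F'(0) = 0, and F''(0) = (−x(0)⁴ + 8x(0)² − 8)/(2x(0)²) < 0; consequently there exists ε > 0 such that F(t) ≤ 1 for all t ∈ (−ε, ε). -/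

import Mathlib

open Set Filter Topology

/-- The second derivative of `x` as given by the ODE, as a function of `t, x, x'`. -/
noncomputable def gfun (x : ℝ → ℝ) (s : ℝ) : ℝ :=
  (1 + deriv x s ^ 2) * ((x s)⁻¹ - (x s - deriv x s * s) / 2)

/-- Numerator of the gap function. -/
noncomputable def Nfun (x : ℝ → ℝ) (s : ℝ) : ℝ :=
  (4 - x s * (x s - deriv x s * s)) * (x s - deriv x s * s)

/-- Denominator of the gap function. -/
noncomputable def Dfun (x : ℝ → ℝ) (s : ℝ) : ℝ :=
  x s * (4 - x s ^ 2 - s ^ 2) * (1 + deriv x s ^ 2)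

/-- Derivative of the numerator. -/
noncomputable def Ndfun (x : ℝ → ℝ) (s : ℝ) : ℝ :=
  (4 - x s * (x s - deriv x s * s)) * (-(gfun x s * s)) -
    (deriv x s * (x s - deriv x s * s) + x s * (-(gfun x s * s))) * (x s - deriv x s * s)

/-- Derivative of the denominator. -/
noncomputable def Ddfun (x : ℝ → ℝ) (s : ℝ) : ℝ :=
  (deriv x s * (4 - x s ^ 2 - s ^ 2) + x s * (-(2 * x s * deriv x s) - 2 * s)) *
      (1 + deriv x s ^ 2) +
    x s * (4 - x s ^ 2 - s ^ 2) * (2 * deriv x s * gfun x s)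

/-- Derivative of the gap function. -/
noncomputable def Fdfun (x : ℝ → ℝ) (s : ℝ) : ℝ :=
  (Ndfun x s * Dfun x s - Nfun x s * Ddfun x s) / Dfun x s ^ 2

set_option maxHeartbeats 1600000 in
/-- Let `x` be a positive `C²` solution on `(−c, c)` of the Gaussian
minimal-surface-of-revolution equation with `x'(0) = 0` and `0 < x 0 < √(4 − 2√2)`. Then
the gap function
`F t = (4 − x(x − x't))(x − x't) / ( x (4 − x² − t²)(1 + x'²) )`
satisfies `F 0 = 1`, `F' 0 = 0`, `F'' 0 = (−x(0)⁴ + 8x(0)² − 8)/(2x(0)²) < 0`, and hence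
`F t ≤ 1` on some interval `(−ε, ε)`. -/
theorem stmt12 (c : ℝ) (hc : 0 < c) (x : ℝ → ℝ)
    (hx : ContDiffOn ℝ 2 x (Set.Ioo (-c) c))
    (hpos : ∀ t ∈ Set.Ioo (-c) c, 0 < x t)
    (hode : ∀ t ∈ Set.Ioo (-c) c,
      deriv (deriv x) t / (1 + (deriv x t) ^ 2)
        = 1 / x t - (1 / 2) * (x t - deriv x t * t))
    (h0 : deriv x 0 = 0) (hx0pos : 0 < x 0)
    (hx0lt : x 0 < Real.sqrt (4 - 2 * Real.sqrt 2))
    (F : ℝ → ℝ)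
    (hF : F = fun t =>
      (4 - x t * (x t - deriv x t * t)) * (x t - deriv x t * t) /
        (x t * (4 - x t ^ 2 - t ^ 2) * (1 + (deriv x t) ^ 2))) :
    F 0 = 1 ∧ deriv F 0 = 0 ∧
    deriv (deriv F) 0 = (-(x 0 ^ 4) + 8 * x 0 ^ 2 - 8) / (2 * x 0 ^ 2) ∧
    deriv (deriv F) 0 < 0 ∧
    ∃ ε : ℝ, 0 < ε ∧ ∀ t ∈ Set.Ioo (-ε) ε, F t ≤ 1 := by
  have hIop : IsOpen (Ioo (-c) c) := isOpen_Ioo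
  have h0mem : (0 : ℝ) ∈ Ioo (-c) c := ⟨by linarith, hc⟩
  have hInhds : Ioo (-c) c ∈ 𝓝 (0 : ℝ) := hIop.mem_nhds h0mem
  -- basic square-root estimates
  have hs2 : Real.sqrt 2 ≤ 2 := by
    nlinarith [Real.sq_sqrt (by norm_num : (0:ℝ) ≤ 2), Real.sqrt_nonneg 2]
  have h42 : (0:ℝ) ≤ 4 - 2 * Real.sqrt 2 := by linarith
  have ha2 : x 0 ^ 2 < 4 - 2 * Real.sqrt 2 := by
    nlinarith [Real.sq_sqrt h42, Real.sqrt_nonneg (4 - 2 * Real.sqrt 2), hx0pos, hx0lt]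
  have h4pos : 0 < 4 - x 0 ^ 2 := by nlinarith [Real.sqrt_nonneg 2]
  have hx0ne : x 0 ≠ 0 := hx0pos.ne'
  -- differentiability facts
  have h_hasx : ∀ s ∈ Ioo (-c) c, HasDerivAt x (deriv x s) s := fun s hs =>
    ((hx.differentiableOn (by norm_num)).differentiableAt (hIop.mem_nhds hs)).hasDerivAt
  have hp1 : ContDiffOn ℝ 1 (deriv x) (Ioo (-c) c) := hx.deriv_of_isOpen hIop (by norm_num)
  have h_hasp : ∀ s ∈ Ioo (-c) c, HasDerivAt (deriv x) (gfun x s) s := by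
    intro s hs
    have hd := ((hp1.differentiableOn (by norm_num)).differentiableAt (hIop.mem_nhds hs)).hasDerivAt
    have hne : (1:ℝ) + deriv x s ^ 2 ≠ 0 := by positivity
    have hxne : x s ≠ 0 := (hpos s hs).ne'
    have hode' : deriv (deriv x) s = gfun x s := by
      have h := hode s hs
      rw [div_eq_iff hne] at h
      rw [h]; simp only [gfun]; field_simp
    rwa [hode'] at hd
  -- continuity of the denominator; choice of δ
  have hxc : ContinuousAt x 0 := (h_hasx 0 h0mem).differentiableAt.continuousAt
  have hpc : ContinuousAt (deriv x) 0 := (h_hasp 0 h0mem).differentiableAt.continuousAt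
  have hDc : ContinuousAt (fun s => Dfun x s) 0 := by
    simp only [Dfun]
    exact (hxc.mul ((continuousAt_const.sub (hxc.pow 2)).sub ((continuousAt_id).pow 2))).mul
      (continuousAt_const.add (hpc.pow 2))
  have hD0pos : 0 < Dfun x 0 := by
    simp only [Dfun, h0]
    norm_num
    nlinarith
  have hDev : ∀ᶠ s in 𝓝 (0:ℝ), 0 < Dfun x s := hDc.eventually (eventually_gt_nhds hD0pos)
  obtain ⟨δ, hδpos, hδsub⟩ := Metric.mem_nhds_iff.mp (inter_mem hDev hInhds)
  have hball : ∀ s ∈ Ioo (-δ) δ, 0 < Dfun x s ∧ s ∈ Ioo (-c) c := by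
    intro s hs
    have : s ∈ Metric.ball (0:ℝ) δ := by
      rw [Real.ball_eq_Ioo]; constructor <;> [linarith [hs.1]; linarith [hs.2]]
    exact hδsub this
  -- derivative of F on (−δ, δ)
  have hFder : ∀ s ∈ Ioo (-δ) δ, HasDerivAt F (Fdfun x s) s := by
    intro s hs
    obtain ⟨hDs, hsI⟩ := hball s hs
    have hx' := h_hasx s hsI
    have hp' := h_hasp s hsI
    have hy := hx'.sub (hp'.mul (hasDerivAt_id s))
    have hA := (hx'.mul hy).const_sub 4
    have hN := hA.mul hy
    have hv := ((hx'.pow 2).const_sub 4).sub (hasDerivAt_pow 2 s)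
    have hw := (hp'.pow 2).const_add 1
    have hDd := (hx'.mul hv).mul hw
    have hq := hN.div hDd (by simpa [Dfun] using hDs.ne')
    obtain ⟨V, hV, hVeq⟩ :
        ∃ V, HasDerivAt (fun t =>
          (4 - x t * (x t - deriv x t * t)) * (x t - deriv x t * t) /
            (x t * (4 - x t ^ 2 - t ^ 2) * (1 + (deriv x t) ^ 2))) V s ∧ V = Fdfun x s :=
      ⟨_, hq, by simp only [Fdfun, Ndfun, Ddfun, Nfun, Dfun, id_eq]; push_cast; norm_num; ring⟩
    rw [hF]
    exact hVeq ▸ hV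
  have hδnhds : Ioo (-δ) δ ∈ 𝓝 (0:ℝ) := Ioo_mem_nhds (by linarith) hδpos
  have hderivF_eq : deriv F =ᶠ[𝓝 (0:ℝ)] Fdfun x := by
    filter_upwards [hδnhds] with s hs
    exact (hFder s hs).deriv
  -- Part 1 : F 0 = 1
  have part1 : F 0 = 1 := by
    rw [hF]
    simp only [h0]
    have h2 : (4 : ℝ) - x 0 ^ 2 ≠ 0 := h4pos.ne'
    field_simp
    ring_nf
    field_simp
  -- Part 2 : F' 0 = 0
  have h0δ : (0:ℝ) ∈ Ioo (-δ) δ := ⟨by linarith, hδpos⟩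
  have part2 : deriv F 0 = 0 := by
    rw [(hFder 0 h0δ).deriv]
    simp [Fdfun, Ndfun, Ddfun, h0]
  -- Second derivative at 0
  obtain ⟨E, hE, hEeq⟩ :
      ∃ E, HasDerivAt (Fdfun x) E 0 ∧ E = (-(x 0 ^ 4) + 8 * x 0 ^ 2 - 8) / (2 * x 0 ^ 2) := by
    have hx0d : HasDerivAt x 0 0 := by
      have := h_hasx 0 h0mem; rwa [h0] at this
    have hp0d : HasDerivAt (deriv x) (gfun x 0) 0 := h_hasp 0 h0mem
    have hg0d : HasDerivAt (gfun x) 0 0 := by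
      have hgc := ((hp0d.pow 2).const_add 1).mul
        ((hx0d.inv hx0ne).sub ((hx0d.sub (hp0d.mul (hasDerivAt_id 0))).div_const 2))
      refine hgc.congr_deriv ?_
      simp [h0]
    have hy := hx0d.sub (hp0d.mul (hasDerivAt_id 0))
    have hyd := (hg0d.mul (hasDerivAt_id 0)).neg
    have hA := (hx0d.mul hy).const_sub 4
    have hN := hA.mul hy
    have hNd := (hA.mul hyd).sub (((hp0d.mul hy).add (hx0d.mul hyd)).mul hy)
    have hv := ((hx0d.pow 2).const_sub 4).sub (hasDerivAt_pow 2 0)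
    have hw := (hp0d.pow 2).const_add 1
    have hvd := (((hx0d.const_mul 2).mul hp0d).neg).sub ((hasDerivAt_id 0).const_mul 2)
    have hwd := (hp0d.const_mul 2).mul hg0d
    have hD := (hx0d.mul hv).mul hw
    have hDd := (((hp0d.mul hv).add (hx0d.mul hvd)).mul hw).add ((hx0d.mul hv).mul hwd)
    have hnum := (hNd.mul hD).sub (hN.mul hDd)
    have hden := hD.pow 2
    have hDne : (x 0 * (4 - x 0 ^ 2 - 0 ^ 2) * (1 + deriv x 0 ^ 2)) ^ 2 ≠ 0 := by
      have := hD0pos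
      simp only [Dfun] at this
      positivity
    have hbig : HasDerivAt (Fdfun x) _ 0 := hnum.div hden hDne
    refine ⟨_, hbig, ?_⟩
    simp only [gfun, h0, id_eq, Dfun]
    norm_num
    field_simp
    simp only [h0]
    ring
  have part3 : deriv (deriv F) 0 = (-(x 0 ^ 4) + 8 * x 0 ^ 2 - 8) / (2 * x 0 ^ 2) := by
    rw [hderivF_eq.deriv_eq, hE.deriv, hEeq]
  -- Part 4 : negativity
  have hKneg : (-(x 0 ^ 4) + 8 * x 0 ^ 2 - 8) / (2 * x 0 ^ 2) < 0 := by
    apply div_neg_of_neg_of_pos _ (by positivity)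
    have h1 : 0 < 4 - 2 * Real.sqrt 2 - x 0 ^ 2 := by linarith
    have h2 : 0 < 4 + 2 * Real.sqrt 2 - x 0 ^ 2 := by nlinarith [Real.sqrt_nonneg 2]
    nlinarith [mul_pos h1 h2, Real.sq_sqrt (by norm_num : (0:ℝ) ≤ 2)]
  -- Part 5 : local maximum
  have hdd : HasDerivAt (deriv F) ((-(x 0 ^ 4) + 8 * x 0 ^ 2 - 8) / (2 * x 0 ^ 2)) 0 := by
    rw [hEeq] at hE
    exact hE.congr_of_eventuallyEq hderivF_eq
  have hslope := hasDerivAt_iff_tendsto_slope.mp hdd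
  have hneg : ∀ᶠ s in 𝓝[≠] (0:ℝ), slope (deriv F) 0 s < 0 :=
    hslope.eventually (eventually_lt_nhds hKneg)
  rw [eventually_nhdsWithin_iff] at hneg
  obtain ⟨δ₂, hδ₂pos, hδ₂⟩ := Metric.eventually_nhds_iff.mp hneg
  set ε := min δ δ₂ with hε
  have hεpos : 0 < ε := lt_min hδpos hδ₂pos
  have hεδ : ε ≤ δ := min_le_left _ _
  have hεδ₂ : ε ≤ δ₂ := min_le_right _ _
  -- sign of deriv F near 0
  have hsign : ∀ s : ℝ, s ≠ 0 → -ε < s → s < ε → deriv F s / s < 0 := by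
    intro s hs0 hs1 hs2
    have hd : dist s 0 < δ₂ := by
      rw [Real.dist_eq, sub_zero, abs_lt]; constructor <;> [linarith; linarith]
    have := hδ₂ hd (by simpa using hs0)
    rwa [slope_def_field, part2, sub_zero, sub_zero, div_eq_inv_mul, ← div_eq_inv_mul] at this
  have hcont : ∀ s ∈ Ioo (-δ) δ, ContinuousWithinAt F (Ioo (-δ) δ) s := fun s hs =>
    (hFder s hs).differentiableAt.continuousAt.continuousWithinAt
  refine ⟨part1, part2, part3, part3 ▸ hKneg, ε, hεpos, ?_⟩
  intro t ht
  rcases lt_trichotomy t 0 with htneg | hteq | htpos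
  · -- t < 0 : F strictly increasing on [t, 0]
    have hsub : Icc t 0 ⊆ Ioo (-δ) δ := by
      intro s hs
      constructor
      · have : -δ ≤ -ε := by linarith
        have := ht.1; have := hs.1; linarith
      · have := hs.2; linarith
    have hmono := strictMonoOn_of_deriv_pos (convex_Icc t 0)
      (fun s hs => ((hFder s (hsub hs)).differentiableAt.continuousAt).continuousWithinAt)
      (by
        intro s hs
        rw [interior_Icc] at hs
        have hs0 : s ≠ 0 := hs.2.ne
        have hq := hsign s hs0 (by have := ht.1; have := hs.1; linarith) (by linarith [hs.2])
        rcases div_neg_iff.mp hq with ⟨h1, h2⟩ | ⟨h1, h2⟩ <;> linarith [hs.2])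
    have := hmono (left_mem_Icc.mpr htneg.le) (right_mem_Icc.mpr htneg.le) htneg
    linarith [part1]
  · simp [hteq, part1]
  · -- t > 0 : F strictly decreasing on [0, t]
    have hsub : Icc 0 t ⊆ Ioo (-δ) δ := by
      intro s hs
      constructor
      · have := hs.1; linarith
      · have := hs.2; have := ht.2; linarith
    have hanti := strictAntiOn_of_deriv_neg (convex_Icc 0 t)
      (fun s hs => ((hFder s (hsub hs)).differentiableAt.continuousAt).continuousWithinAt)
      (by
        intro s hs
        rw [interior_Icc] at hs
        have hs0 : s ≠ 0 := hs.1.ne'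
        have hq := hsign s hs0 (by have := hs.1; linarith) (by linarith [hs.2, ht.2])
        rcases div_neg_iff.mp hq with ⟨h1, h2⟩ | ⟨h1, h2⟩ <;> linarith [hs.1])
    have := hanti (left_mem_Icc.mpr htpos.le) (right_mem_Icc.mpr htpos.le) htpos
    linarith [part1]
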